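/- For α with 1/9 ≤ α ≤ 1, the complex numbers z_±(α) = -(3 - 2√α + 3α)/8 ± (3i(1+√α)/8)·√((1-√α/3)(3√α-1)) satisfy |z_±(α)| = √α. -/

import Mathlib

/-- For `1/9 ≤ α ≤ 1`, the complex numbers
`z_±(α) = -(3 - 2√α + 3α)/8 ± (3i(1+√α)/8)·√((1-√α/3)(3√α-1))`
satisfy `|z_±(α)| = √α`. -/
theorem abs_zpm_eq_sqrt_alpha (α : ℝ) (h1 : 1/9 ≤ α) (h2 : α ≤ 1) :
    ‖(↑(-(3 - 2*Real.sqrt α + 3*α)/8) : ℂ) +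
        Complex.I * (↑((3*(1+Real.sqrt α)/8) *
          Real.sqrt ((1 - Real.sqrt α/3)*(3*Real.sqrt α - 1))) : ℂ)‖ = Real.sqrt α ∧
    ‖(↑(-(3 - 2*Real.sqrt α + 3*α)/8) : ℂ) -
        Complex.I * (↑((3*(1+Real.sqrt α)/8) *
          Real.sqrt ((1 - Real.sqrt α/3)*(3*Real.sqrt α - 1))) : ℂ)‖ = Real.sqrt α := by
  set s := Real.sqrt α with hs
  have hs0 : 0 ≤ s := Real.sqrt_nonneg α
  have hs2 : s^2 = α := Real.sq_sqrt (by linarith : (0:ℝ) ≤ α)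
  have hsl : 1/3 ≤ s := by
    have h9 : Real.sqrt (1/9) = 1/3 := by
      rw [show (1/9 : ℝ) = (1/3)^2 by norm_num, Real.sqrt_sq (by norm_num)]
    have := Real.sqrt_le_sqrt h1
    rw [h9] at this
    exact this
  have hsu : s ≤ 1 := Real.sqrt_le_one.mpr h2
  set t := Real.sqrt ((1 - s/3)*(3*s - 1)) with ht
  have ht0 : 0 ≤ t := Real.sqrt_nonneg _
  have ht2 : t^2 = (1 - s/3)*(3*s - 1) :=
    Real.sq_sqrt (mul_nonneg (by linarith) (by linarith))
  set a : ℝ := -(3 - 2*s + 3*α)/8 with ha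
  set b : ℝ := (3*(1+s)/8) * t with hb
  have key : a^2 + b^2 = α := by
    rw [ha, hb]
    have : ((3*(1+s)/8) * t)^2 = (3*(1+s)/8)^2 * t^2 := by ring
    rw [this, ht2, ← hs2]
    ring
  have habs : ∀ c : ℝ, ‖(a : ℂ) + (c : ℂ) * Complex.I‖ = Real.sqrt (a^2 + c^2) := by
    intro c
    exact Complex.norm_add_mul_I a c
  constructor
  · have : (↑a : ℂ) + Complex.I * (↑b : ℂ) = (a : ℂ) + (b : ℂ) * Complex.I := by ring
    rw [this, habs b, key]
  · have : (↑a : ℂ) - Complex.I * (↑b : ℂ) = (a : ℂ) + ((-b : ℝ) : ℂ) * Complex.I := by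
      push_cast; ring
    rw [this, habs (-b), show a^2 + (-b)^2 = a^2 + b^2 by ring, key]
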